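/- For partitions X and Y of Ω, the mutual information I(X;Y) := H(X) + H(Y) − H(X∨Y) equals μ(ΔX ∩ ΔY), the sum of μ(S) over atoms crossed by both X and Y. -/

import Mathlib

open Finset BigOperators

variable {Ω : Type*} [Fintype Ω] [DecidableEq Ω]

/-- Probability of a subset: `p(T) = Σ_{ω∈T} p(ω)`. -/
def pS (p : Ω → ℝ) (T : Finset Ω) : ℝ := ∑ ω ∈ T, p ω

/-- `p(T) log p(T)` (with `0 log 0 = 0` since `Real.log 0 = 0`). -/
noncomputable def plog (p : Ω → ℝ) (T : Finset Ω) : ℝ := pS p T * Real.log (pS p T)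

/-- The interior-loss measure of an atom `S`. -/
noncomputable def mu (p : Ω → ℝ) (S : Finset Ω) : ℝ :=
  ∑ T ∈ S.powerset.filter (· ≠ ∅), (-1 : ℝ) ^ (S.card - T.card) * plog p T

/-- `μ` of a set of atoms, extended additively. -/
noncomputable def muSet (p : Ω → ℝ) (R : Finset (Finset Ω)) : ℝ := ∑ S ∈ R, mu p S

/-- A partition `X` crosses an atom `S` when `S` meets at least two distinct parts. -/
def crossed (X : Finpartition (univ : Finset Ω)) (S : Finset Ω) : Prop :=
  ∃ P ∈ X.parts, ∃ Q ∈ X.parts, P ≠ Q ∧ (S ∩ P).Nonempty ∧ (S ∩ Q).Nonempty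

open scoped Classical in
/-- The content `ΔX`: set of atoms crossed by the partition `X`. -/
noncomputable def content (X : Finpartition (univ : Finset Ω)) : Finset (Finset Ω) :=
  (univ : Finset (Finset Ω)).filter (fun S => 2 ≤ S.card ∧ crossed X S)

/-- Shannon entropy of a partition. -/
noncomputable def Hent (p : Ω → ℝ) (X : Finpartition (univ : Finset Ω)) : ℝ :=
  - ∑ P ∈ X.parts, pS p P * Real.log (pS p P)

/-- `X` refines `Z`: every part of `X` lies in a part of `Z`. -/
def refines (X Z : Finpartition (univ : Finset Ω)) : Prop :=
  ∀ P ∈ X.parts, ∃ Q ∈ Z.parts, P ⊆ Q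

open scoped Classical

lemma plog_empty (p : Ω → ℝ) : plog p ∅ = 0 := by
  simp [plog, pS]

lemma mu_empty (p : Ω → ℝ) : mu p (∅ : Finset Ω) = 0 := by
  simp [mu, Finset.filter_singleton]

lemma mu_eq_full (p : Ω → ℝ) (S : Finset Ω) :
    mu p S = ∑ T ∈ S.powerset, (-1 : ℝ) ^ (S.card - T.card) * plog p T := by
  rw [mu, Finset.sum_filter]
  refine Finset.sum_congr rfl fun T _ => ?_
  by_cases h : T = ∅
  · subst h; simp [plog_empty]
  · simp [h]

lemma neg_one_pow_sum (A : Finset Ω) :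
    ∑ V ∈ A.powerset, (-1 : ℝ) ^ V.card = if A = ∅ then 1 else 0 := by
  have h := Finset.sum_powerset_neg_one_pow_card (x := A)
  have h2 : ((∑ m ∈ A.powerset, (-1 : ℤ) ^ m.card : ℤ) : ℝ)
      = ((if A = ∅ then 1 else 0 : ℤ) : ℝ) := by rw [h]
  push_cast [apply_ite (fun z : ℤ => (z : ℝ))] at h2
  simpa using h2

lemma sum_supersets (S U : Finset Ω) (hU : U ∈ S.powerset) :
    ∑ T ∈ S.powerset.filter (fun T => U ⊆ T), (-1 : ℝ) ^ (T.card - U.card)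
      = if U = S then 1 else 0 := by
  rw [Finset.mem_powerset] at hU
  have key : ∑ T ∈ S.powerset.filter (fun T => U ⊆ T), (-1 : ℝ) ^ (T.card - U.card)
      = ∑ V ∈ (S \ U).powerset, (-1 : ℝ) ^ V.card := by
    refine Finset.sum_nbij' (fun T => T \ U) (fun V => V ∪ U) ?_ ?_ ?_ ?_ ?_
    · intro T hT
      rw [Finset.mem_filter, Finset.mem_powerset] at hT
      rw [Finset.mem_powerset]
      exact Finset.sdiff_subset_sdiff hT.1 Finset.Subset.rfl
    · intro V hV
      rw [Finset.mem_powerset] at hV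
      rw [Finset.mem_filter, Finset.mem_powerset]
      refine ⟨Finset.union_subset (hV.trans (Finset.sdiff_subset)) hU, Finset.subset_union_right⟩
    · intro T hT
      rw [Finset.mem_filter] at hT
      exact Finset.sdiff_union_of_subset hT.2
    · intro V hV
      rw [Finset.mem_powerset] at hV
      exact Finset.union_sdiff_cancel_right
        ((Finset.disjoint_of_subset_left hV Finset.sdiff_disjoint))
    · intro T hT
      rw [Finset.mem_filter] at hT
      rw [Finset.card_sdiff_of_subset hT.2]
  rw [key, neg_one_pow_sum]
  by_cases h : U = S
  · subst h; simp
  · rw [if_neg, if_neg h]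
    intro hSU
    exact h (Finset.Subset.antisymm hU (Finset.sdiff_eq_empty_iff_subset.mp hSU))

lemma sum_mu_powerset (p : Ω → ℝ) (S : Finset Ω) :
    ∑ T ∈ S.powerset, mu p T = plog p S := by
  calc ∑ T ∈ S.powerset, mu p T
      = ∑ T ∈ S.powerset, ∑ U ∈ T.powerset, (-1 : ℝ) ^ (T.card - U.card) * plog p U :=
        Finset.sum_congr rfl fun T _ => mu_eq_full p T
    _ = ∑ U ∈ S.powerset, ∑ T ∈ S.powerset.filter (fun T => U ⊆ T),
          (-1 : ℝ) ^ (T.card - U.card) * plog p U := by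
        refine Finset.sum_comm' ?_
        intro T U
        simp only [Finset.mem_powerset, Finset.mem_filter]
        constructor
        · rintro ⟨hTS, hUT⟩; exact ⟨⟨hTS, hUT⟩, hUT.trans hTS⟩
        · rintro ⟨⟨hTS, hUT⟩, -⟩; exact ⟨hTS, hUT⟩
    _ = ∑ U ∈ S.powerset, (if U = S then 1 else 0) * plog p U := by
        refine Finset.sum_congr rfl fun U hU => ?_
        rw [← Finset.sum_mul, sum_supersets S U hU]
    _ = plog p S := by
        simp only [ite_mul, one_mul, zero_mul]
        rw [Finset.sum_ite_eq' S.powerset S (plog p)]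
        simp

lemma card_two_of_crossed {X : Finpartition (univ : Finset Ω)} {S : Finset Ω}
    (h : crossed X S) : 2 ≤ S.card := by
  obtain ⟨P, hP, Q, hQ, hPQ, ⟨x, hx⟩, ⟨y, hy⟩⟩ := h
  rw [Finset.mem_inter] at hx hy
  refine Finset.one_lt_card.mpr ⟨x, hx.1, y, hy.1, ?_⟩
  rintro rfl
  exact hPQ (X.eq_of_mem_parts hP hQ hx.2 hy.2)

lemma not_crossed_iff {X : Finpartition (univ : Finset Ω)} {S : Finset Ω} (hS : S ≠ ∅) :
    ¬ crossed X S ↔ ∃ P ∈ X.parts, S ⊆ P := by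
  constructor
  · intro hnc
    obtain ⟨x, hx⟩ := Finset.nonempty_iff_ne_empty.mpr hS
    obtain ⟨P, hP, hxP⟩ := X.exists_mem (Finset.mem_univ x)
    refine ⟨P, hP, fun y hy => ?_⟩
    obtain ⟨Q, hQ, hyQ⟩ := X.exists_mem (Finset.mem_univ y)
    by_cases hPQ : P = Q
    · exact hPQ ▸ hyQ
    · exact absurd ⟨P, hP, Q, hQ, hPQ, ⟨x, Finset.mem_inter.mpr ⟨hx, hxP⟩⟩,
        ⟨y, Finset.mem_inter.mpr ⟨hy, hyQ⟩⟩⟩ hnc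
  · rintro ⟨P, hP, hSP⟩ ⟨Q, hQ, Q', hQ', hne, ⟨a, ha⟩, ⟨b, hb⟩⟩
    rw [Finset.mem_inter] at ha hb
    have h1 : P = Q := X.eq_of_mem_parts hP hQ (hSP ha.1) ha.2
    have h2 : P = Q' := X.eq_of_mem_parts hP hQ' (hSP hb.1) hb.2
    exact hne (h1 ▸ h2)

lemma content_eq (X : Finpartition (univ : Finset Ω)) :
    content X = (univ : Finset Ω).powerset.filter (fun S => crossed X S) := by
  ext S
  simp only [content, Finset.mem_filter, Finset.mem_univ, true_and, Finset.mem_powerset]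
  constructor
  · rintro ⟨-, h⟩; exact ⟨Finset.subset_univ S, h⟩
  · rintro ⟨-, h⟩; exact ⟨card_two_of_crossed h, h⟩

lemma Hent_eq_muSet (p : Ω → ℝ) (hsum : ∑ ω, p ω = 1) (X : Finpartition (univ : Finset Ω)) :
    Hent p X = muSet p (content X) := by
  have hplog : plog p (univ : Finset Ω) = 0 := by
    simp [plog, pS, hsum]
  have htotal : ∑ T ∈ (univ : Finset Ω).powerset, mu p T = 0 := by
    rw [sum_mu_powerset, hplog]
  have hsplit : ∑ T ∈ (univ : Finset Ω).powerset, mu p T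
      = muSet p (content X)
        + ∑ T ∈ (univ : Finset Ω).powerset.filter (fun T => ¬ crossed X T), mu p T := by
    rw [muSet, content_eq,
      ← Finset.sum_filter_add_sum_filter_not (univ : Finset Ω).powerset (fun T => crossed X T)]
  have huncross : ∑ T ∈ (univ : Finset Ω).powerset.filter (fun T => ¬ crossed X T), mu p T
      = ∑ P ∈ X.parts, plog p P := by
    have hstep : (univ : Finset Ω).powerset.filter (fun T => ¬ crossed X T ∧ T ≠ ∅)
        = X.parts.biUnion (fun P => P.powerset.filter (· ≠ ∅)) := by
      ext T
      simp only [Finset.mem_filter, Finset.mem_powerset, Finset.mem_biUnion]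
      constructor
      · rintro ⟨-, hnc, hne⟩
        obtain ⟨P, hP, hTP⟩ := (not_crossed_iff hne).mp hnc
        exact ⟨P, hP, hTP, hne⟩
      · rintro ⟨P, hP, hTP, hne⟩
        exact ⟨Finset.subset_univ T, (not_crossed_iff hne).mpr ⟨P, hP, hTP⟩, hne⟩
    have h1 : ∑ T ∈ (univ : Finset Ω).powerset.filter (fun T => ¬ crossed X T), mu p T
        = ∑ T ∈ (univ : Finset Ω).powerset.filter (fun T => ¬ crossed X T ∧ T ≠ ∅), mu p T := by
      refine (Finset.sum_subset ?_ ?_).symm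
      · intro T hT
        rw [Finset.mem_filter] at hT ⊢
        exact ⟨hT.1, hT.2.1⟩
      · intro T hT hT'
        rw [Finset.mem_filter] at hT hT'
        have : T = ∅ := by
          by_contra hne
          exact hT' ⟨hT.1, hT.2, hne⟩
        subst this
        exact mu_empty p
    rw [h1, hstep, Finset.sum_biUnion]
    · refine Finset.sum_congr rfl fun P hP => ?_
      have : ∑ T ∈ P.powerset.filter (· ≠ ∅), mu p T = ∑ T ∈ P.powerset, mu p T := by
        refine Finset.sum_subset (Finset.filter_subset _ _) ?_
        intro T hT hT'
        rw [Finset.mem_filter] at hT'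
        have : T = ∅ := by
          by_contra hne
          exact hT' ⟨hT, hne⟩
        subst this
        exact mu_empty p
      rw [this, sum_mu_powerset]
    · intro P hP Q hQ hPQ
      simp only [Function.onFun]
      rw [Finset.disjoint_left]
      intro T hTP hTQ
      rw [Finset.mem_filter, Finset.mem_powerset] at hTP hTQ
      obtain ⟨x, hx⟩ := Finset.nonempty_iff_ne_empty.mpr hTP.2
      exact hPQ (X.eq_of_mem_parts hP hQ (hTP.1 hx) (hTQ.1 hx))
  have : 0 = muSet p (content X) + ∑ P ∈ X.parts, plog p P := by
    rw [← htotal, hsplit, huncross]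
  have hH : Hent p X = - ∑ P ∈ X.parts, plog p P := by
    simp [Hent, plog]
  linarith

lemma crossed_inf_left {X Y : Finpartition (univ : Finset Ω)} {S : Finset Ω}
    (h : crossed X S) : crossed (X ⊓ Y) S := by
  obtain ⟨P, hP, P', hP', hne, ⟨a, ha⟩, ⟨b, hb⟩⟩ := h
  rw [Finset.mem_inter] at ha hb
  obtain ⟨Q, hQ, haQ⟩ := Y.exists_mem (Finset.mem_univ a)
  obtain ⟨Q', hQ', hbQ'⟩ := Y.exists_mem (Finset.mem_univ b)
  have hmem : ∀ {R T : Finset Ω}, R ∈ X.parts → T ∈ Y.parts → (R ∩ T).Nonempty →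
      R ∩ T ∈ (X ⊓ Y).parts := by
    intro R T hR hT hne'
    rw [Finpartition.parts_inf, Finset.mem_erase]
    constructor
    · rw [Finset.bot_eq_empty]
      exact Finset.nonempty_iff_ne_empty.mp hne'
    · exact Finset.mem_image.mpr ⟨(R, T), Finset.mem_product.mpr ⟨hR, hT⟩, rfl⟩
  refine ⟨P ∩ Q, hmem hP hQ ⟨a, Finset.mem_inter.mpr ⟨ha.2, haQ⟩⟩,
    P' ∩ Q', hmem hP' hQ' ⟨b, Finset.mem_inter.mpr ⟨hb.2, hbQ'⟩⟩, ?_, ?_, ?_⟩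
  · intro hEq
    have hb' : b ∈ P ∩ Q := hEq ▸ Finset.mem_inter.mpr ⟨hb.2, hbQ'⟩
    exact hne (X.eq_of_mem_parts hP hP' (Finset.mem_inter.mp hb').1 hb.2)
  · exact ⟨a, Finset.mem_inter.mpr ⟨ha.1, Finset.mem_inter.mpr ⟨ha.2, haQ⟩⟩⟩
  · exact ⟨b, Finset.mem_inter.mpr ⟨hb.1, Finset.mem_inter.mpr ⟨hb.2, hbQ'⟩⟩⟩

lemma crossed_inf_right {X Y : Finpartition (univ : Finset Ω)} {S : Finset Ω}
    (h : crossed Y S) : crossed (X ⊓ Y) S := by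
  have := crossed_inf_left (Y := X) h
  rwa [inf_comm] at this

lemma crossed_inf_iff (X Y : Finpartition (univ : Finset Ω)) (S : Finset Ω) :
    crossed (X ⊓ Y) S ↔ crossed X S ∨ crossed Y S := by
  constructor
  · rintro ⟨R, hR, R', hR', hne, ⟨a, ha⟩, ⟨b, hb⟩⟩
    rw [Finpartition.parts_inf, Finset.mem_erase] at hR hR'
    obtain ⟨hRne, hRim⟩ := hR
    obtain ⟨hRne', hRim'⟩ := hR'
    obtain ⟨⟨P, Q⟩, hPQ, rfl⟩ := Finset.mem_image.mp hRim
    obtain ⟨⟨P', Q'⟩, hPQ', rfl⟩ := Finset.mem_image.mp hRim'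
    rw [Finset.mem_product] at hPQ hPQ'
    simp only [Finset.inf_eq_inter] at ha hb hne
    rw [Finset.mem_inter, Finset.mem_inter] at ha hb
    by_cases hPP : P = P'
    · subst hPP
      right
      refine ⟨Q, hPQ.2, Q', hPQ'.2, ?_, ⟨a, Finset.mem_inter.mpr ⟨ha.1, ha.2.2⟩⟩,
        ⟨b, Finset.mem_inter.mpr ⟨hb.1, hb.2.2⟩⟩⟩
      rintro rfl
      exact hne rfl
    · left
      exact ⟨P, hPQ.1, P', hPQ'.1, hPP, ⟨a, Finset.mem_inter.mpr ⟨ha.1, ha.2.1⟩⟩,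
        ⟨b, Finset.mem_inter.mpr ⟨hb.1, hb.2.1⟩⟩⟩
  · rintro (h | h)
    · exact crossed_inf_left h
    · exact crossed_inf_right h

lemma content_inf (X Y : Finpartition (univ : Finset Ω)) :
    content (X ⊓ Y) = content X ∪ content Y := by
  ext S
  simp only [content, Finset.mem_filter, Finset.mem_univ, true_and, Finset.mem_union,
    crossed_inf_iff]
  tauto

theorem mutualInfo_eq_muSet_inter {Ω : Type*} [Fintype Ω] [DecidableEq Ω] (p : Ω → ℝ)
    (hp : ∀ ω, 0 ≤ p ω) (hsum : ∑ ω, p ω = 1)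
    (X Y : Finpartition (univ : Finset Ω)) :
    Hent p X + Hent p Y - Hent p (X ⊓ Y) = muSet p (content X ∩ content Y) := by
  rw [Hent_eq_muSet p hsum X, Hent_eq_muSet p hsum Y, Hent_eq_muSet p hsum (X ⊓ Y), content_inf]
  have h := Finset.sum_union_inter (s₁ := content X) (s₂ := content Y) (f := mu p)
  simp only [muSet]
  linarith
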